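/- arXiv:1904.06921 — 5 statements merged into one kernel-verified Lean document; each statement's English description precedes it below -/
import Mathlib

section
/- Let (M,d) be a geodesic metric space, U ⊆ M, λ > 1, and f : M → M a homeomorphism such that d(f(x),f(y)) ≥ λ·d(x,y) for all x,y ∈ U. Then for every x and every η > 0 with B_η(x) ⊆ U, the open ball B_{λη}(f(x)) is contained in f(B_η(x)). -/
/-- In a geodesic metric space, a `(lam, U)`-expanding homeomorphism satisfies the
ball-expansion property: `B_{lam·η}(f x) ⊆ f(B_η(x))` whenever `B_η(x) ⊆ U`. -/
theorem expanding_ball_of_geodesic {M : Type*} [MetricSpace M]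
    (hgeo : ∀ x y : M, ∃ γ : ℝ → M, γ 0 = x ∧ γ (dist x y) = y ∧
      ∀ s ∈ Set.Icc (0 : ℝ) (dist x y), ∀ t ∈ Set.Icc (0 : ℝ) (dist x y),
        dist (γ s) (γ t) = |s - t|)
    (f : M ≃ₜ M) (U : Set M) (lam : ℝ) (hlam : 1 < lam)
    (hexp : ∀ x ∈ U, ∀ y ∈ U, lam * dist x y ≤ dist (f x) (f y)) :
    ∀ (x : M) (η : ℝ), 0 < η → Metric.ball x η ⊆ U →
      Metric.ball (f x) (lam * η) ⊆ f '' Metric.ball x η := by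
  intro x η hη hball y hy
  have hlam0 : (0 : ℝ) < lam := lt_trans one_pos hlam
  obtain ⟨γ, hγ0, hγd, hiso⟩ := hgeo (f x) y
  set d : ℝ := dist (f x) y with hd
  have hd0 : 0 ≤ d := dist_nonneg
  have hdlt : d < lam * η := by
    simpa [hd, dist_comm] using hy
  set σ : ℝ → M := fun t => f.symm (γ t) with hσ
  have hσ0 : σ 0 = x := by simp [hσ, hγ0]
  have hγlip : LipschitzOnWith 1 γ (Set.Icc 0 d) :=
    LipschitzOnWith.of_dist_le_mul fun s hs t ht => by
      rw [hiso s hs t ht, Real.dist_eq]; simp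
  have hσcont : ContinuousOn σ (Set.Icc 0 d) :=
    f.symm.continuous.comp_continuousOn hγlip.continuousOn
  -- key: points of the pulled-back geodesic stay within t/lam of x
  set A : Set ℝ := {t | t ∈ Set.Icc 0 d ∧ dist x (σ t) ≤ t / lam} with hA
  have h0A : (0 : ℝ) ∈ A := by
    refine ⟨⟨le_refl 0, hd0⟩, ?_⟩
    simp [hσ0]
  have hAclosed : IsClosed A := by
    have : A = Set.Icc 0 d ∩ (fun t => (dist x (σ t), t / lam)) ⁻¹' {p : ℝ × ℝ | p.1 ≤ p.2} := by
      ext t; simp [hA, Set.mem_inter_iff, and_comm]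

    rw [this]
    exact ContinuousOn.preimage_isClosed_of_isClosed
      (((continuous_dist.comp (Continuous.prodMk continuous_const f.symm.continuous)).comp_continuousOn
          hγlip.continuousOn).prodMk (continuousOn_id.div_const lam))
      isClosed_Icc isClosed_le_prod
  have hAbdd : BddAbove A := ⟨d, fun t ht => ht.1.2⟩
  have hAne : A.Nonempty := ⟨0, h0A⟩
  set T : ℝ := sSup A with hT
  have hTA : T ∈ A := hAclosed.csSup_mem hAne hAbdd
  have hTd : T ≤ d := hTA.1.2
  have hTover : ∀ t ∈ A, t ≤ T := fun t ht => le_csSup hAbdd ht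
  have hTltη : T / lam < η := by
    calc T / lam ≤ d / lam := by gcongr
    _ < η := by rw [div_lt_iff₀ hlam0]; linarith [hdlt]
  have hTeq : T = d := by
    by_contra hne
    have hTlt : T < d := lt_of_le_of_ne hTd hne
    -- σ T ∈ U
    have hσTU : σ T ∈ U := hball (by
      apply Metric.mem_ball.2
      rw [dist_comm]
      exact lt_of_le_of_lt hTA.2 hTltη)
    -- continuity at T within Icc
    have hcw : ContinuousWithinAt σ (Set.Icc 0 d) T := hσcont T hTA.1
    rw [Metric.continuousWithinAt_iff] at hcw
    obtain ⟨δ, hδ0, hδ⟩ := hcw (η - T / lam) (by linarith)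
    set t : ℝ := min (T + δ / 2) d with ht
    have htT : T < t := lt_min (by linarith) hTlt
    have htIcc : t ∈ Set.Icc 0 d := ⟨le_trans hTA.1.1 htT.le, min_le_right _ _⟩
    have htclose : dist t T < δ := by
      rw [Real.dist_eq, abs_of_pos (by linarith)]
      have : t ≤ T + δ / 2 := min_le_left _ _
      linarith
    have hσtσT : dist (σ t) (σ T) < η - T / lam := hδ htIcc htclose
    have hσtU : σ t ∈ U := hball (by
      apply Metric.mem_ball.2
      rw [dist_comm]
      calc dist x (σ t) ≤ dist x (σ T) + dist (σ T) (σ t) := dist_triangle _ _ _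
        _ < T / lam + (η - T / lam) := by
            rw [dist_comm (σ T)]
            exact add_lt_add_of_le_of_lt hTA.2 hσtσT
        _ = η := by ring)
    -- expansion gives the Lipschitz bound
    have hfeq : dist (f (σ T)) (f (σ t)) = t - T := by
      have : f (σ T) = γ T := by simp [hσ]
      have h2 : f (σ t) = γ t := by simp [hσ]
      rw [this, h2, hiso T hTA.1 t htIcc, abs_of_nonpos (by linarith)]
      ring
    have hexpTt : lam * dist (σ T) (σ t) ≤ t - T := by
      rw [← hfeq]; exact hexp _ hσTU _ hσtU
    have htA : t ∈ A := by
      refine ⟨htIcc, ?_⟩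
      calc dist x (σ t) ≤ dist x (σ T) + dist (σ T) (σ t) := dist_triangle _ _ _
        _ ≤ T / lam + (t - T) / lam := by
            refine add_le_add hTA.2 ?_
            rw [le_div_iff₀ hlam0, mul_comm]
            exact hexpTt
        _ = t / lam := by field_simp; ring
    exact absurd (hTover t htA) (not_le.2 htT)
  -- conclude
  have : dist x (σ d) < η := by
    have := hTA.2
    rw [hTeq] at this
    exact lt_of_le_of_lt this (by rw [div_lt_iff₀ hlam0]; linarith)
  refine ⟨σ d, Metric.mem_ball.2 (by rwa [dist_comm]), ?_⟩
  simp [hσ, hγd]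
end

section
/- Let (M,d) be a proper metric space, U ⊆ M a bounded open subset, λ > 1, and f a homeomorphism of M that is λ-expanding on U. Then for every δ > 0 there exists δ' > 0 such that f is (λ, U'; δ')-expanding, where U' is the interior of U^δ = {x ∈ U : B_δ(x) ⊆ U}. That is: f is λ-expanding on U', and whenever B_η(x) ⊆ U' with η ≤ δ', one has B_{λη}(f(x)) ⊆ f(B_η(x)). -/
/-- If `f` is `lam`-expanding on a bounded open subset `U` of a proper metric space, then
for every `δ > 0` there is `δ' > 0` such that `f` is `(lam, U'; δ')`-expanding, where
`U' = interior {x ∈ U | B_δ(x) ⊆ U}`. -/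
theorem expanding_on_shrunken_subset {M : Type*} [MetricSpace M] [ProperSpace M]
    (f : M ≃ₜ M) (U : Set M) (hUo : IsOpen U) (hUb : Bornology.IsBounded U)
    (lam : ℝ) (hlam : 1 < lam)
    (hexp : ∀ x ∈ U, ∀ y ∈ U, lam * dist x y ≤ dist (f x) (f y)) :
    ∀ δ : ℝ, 0 < δ → ∃ δ' : ℝ, 0 < δ' ∧
      (∀ x ∈ interior {z ∈ U | Metric.ball z δ ⊆ U},
        ∀ y ∈ interior {z ∈ U | Metric.ball z δ ⊆ U},
          lam * dist x y ≤ dist (f x) (f y)) ∧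
      (∀ (x : M) (η : ℝ), 0 < η → η ≤ δ' →
        Metric.ball x η ⊆ interior {z ∈ U | Metric.ball z δ ⊆ U} →
          Metric.ball (f x) (lam * η) ⊆ f '' Metric.ball x η) := by
  intro δ hδ
  have hlam0 : (0:ℝ) < lam := lt_trans one_pos hlam
  set S₀ : Set M := {z ∈ U | Metric.ball z δ ⊆ U} with hS₀
  set U' : Set M := interior S₀ with hU'
  have hU'sub : U' ⊆ S₀ := interior_subset
  have hS₀U : S₀ ⊆ U := Set.sep_subset _ _
  set K : Set M := closure U' with hK
  have hKc : IsCompact K := (hUb.subset (hU'sub.trans hS₀U)).isCompact_closure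
  set C : Set M := f.symm '' (Metric.cthickening 1 (f '' K)) with hC
  have hCc : IsCompact C :=
    ((hKc.image f.continuous).cthickening).image f.symm.continuous
  set S : Set (M × M) := (K ×ˢ C) ∩ {p | δ ≤ dist p.1 p.2} with hS
  have hScomp : IsCompact S :=
    (hKc.prod hCc).inter_right
      (isClosed_le continuous_const (continuous_fst.dist continuous_snd))
  obtain ⟨ε, hε0, hεS⟩ : ∃ ε > 0, ∀ p ∈ S, ε ≤ dist (f p.1) (f p.2) := by
    rcases S.eq_empty_or_nonempty with h | h
    · exact ⟨1, one_pos, by simp [h]⟩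
    · obtain ⟨p₀, hp₀S, hmin⟩ := hScomp.exists_isMinOn h
        (((f.continuous.comp continuous_fst).dist
          (f.continuous.comp continuous_snd)).continuousOn)
      have hne : p₀.1 ≠ p₀.2 := by
        intro hEq
        have : δ ≤ dist p₀.1 p₀.2 := hp₀S.2
        rw [hEq, dist_self] at this
        linarith
      exact ⟨dist (f p₀.1) (f p₀.2), dist_pos.2 fun h => hne (f.injective h), hmin⟩
  refine ⟨min ε 1 / lam, by positivity, ?_, ?_⟩
  · intro x hx y hy
    exact hexp x (hS₀U (hU'sub hx)) y (hS₀U (hU'sub hy))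
  · intro x η hη hηδ' hball y hy
    set z : M := f.symm y with hz
    have hfz : f z = y := f.apply_symm_apply y
    have hxU' : x ∈ U' := hball (Metric.mem_ball_self hη)
    have hxS : x ∈ S₀ := hU'sub hxU'
    have hdy : dist (f x) y < lam * η := by
      rw [dist_comm]; exact Metric.mem_ball.mp hy
    have hle : lam * η ≤ min ε 1 := by
      have := mul_le_mul_of_nonneg_left hηδ' hlam0.le
      calc lam * η ≤ lam * (min ε 1 / lam) := this
        _ = min ε 1 := by field_simp
    by_cases hcase : dist x z < δ
    · have hzU : z ∈ U := hxS.2 (by simpa [Metric.mem_ball, dist_comm] using hcase)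
      have hex := hexp x hxS.1 z hzU
      rw [hfz] at hex
      have hlt : dist x z < η := by nlinarith
      exact ⟨z, Metric.mem_ball.2 (by rwa [dist_comm]), hfz⟩
    · push_neg at hcase
      exfalso
      by_cases hzC : z ∈ C
      · have hpS : (x, z) ∈ S := ⟨⟨subset_closure hxU', hzC⟩, hcase⟩
        have h1 := hεS _ hpS
        simp only [hfz] at h1
        have h2 : min ε 1 ≤ ε := min_le_left _ _
        linarith
      · have h1 : ¬ dist y (f x) ≤ 1 := by
          intro h
          refine hzC ⟨f z, Metric.mem_cthickening_of_dist_le (f z) (f x) 1 (⇑f '' K)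
            ⟨x, subset_closure hxU', rfl⟩ (by rwa [hfz]), f.symm_apply_apply z⟩
        push_neg at h1
        have h2 : min ε 1 ≤ 1 := min_le_right _ _
        rw [dist_comm] at h1
        linarith
end

section
/- Let f : X → Y be a continuous map between locally compact metrizable spaces, and let O_f denote the set of points x ∈ X at which f is open (i.e., f maps every neighborhood of x to a neighborhood of f(x)). If the complement X \ O_f is meagre (a countable union of nowhere dense sets), then f is quasi-open: the image of every subset of X with nonempty interior has nonempty interior in Y. -/
/-- If `f : X → Y` is a continuous map between locally compact metrizable spaces and the
set of points where `f` fails to be open is meagre, then `f` is quasi-open: images of sets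
with nonempty interior have nonempty interior. -/
theorem quasiOpen_of_meagre_nonopen_locus {X Y : Type*}
    [TopologicalSpace X] [TopologicalSpace Y]
    [LocallyCompactSpace X] [LocallyCompactSpace Y]
    [TopologicalSpace.MetrizableSpace X] [TopologicalSpace.MetrizableSpace Y]
    (f : X → Y) (hf : Continuous f)
    (hmeagre : IsMeagre {x : X | ¬ ∀ V ∈ nhds x, f '' V ∈ nhds (f x)}) :
    ∀ A : Set X, (interior A).Nonempty → (interior (f '' A)).Nonempty := by
  letI := TopologicalSpace.metrizableSpaceMetric X
  intro A hA
  have hdense : Dense {x : X | ¬ ∀ V ∈ nhds x, f '' V ∈ nhds (f x)}ᶜ :=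
    dense_of_mem_residual hmeagre
  obtain ⟨x, hxA, hx⟩ := hdense.inter_open_nonempty _ isOpen_interior hA
  simp only [Set.mem_compl_iff, Set.mem_setOf_eq, not_not] at hx
  have h1 : f '' A ∈ nhds (f x) :=
    hx A (mem_nhds_iff.mpr ⟨interior A, interior_subset, isOpen_interior, hxA⟩)
  exact ⟨f x, mem_interior_iff_mem_nhds.mpr h1⟩
end

section
/- Let (M,d) be a metric space, λ > 1, L ≥ λ, η > 0, and let U_0, U_1, …, U_n ⊆ M be subsets with homeomorphisms g_0, g_1, …, g_n of M such that each g_i⁻¹ is (λ, U_i; η)-expanding, g_0 is L-Lipschitz on a set containing all relevant balls, and there are points p_0, p_1, …, p_{n+1} with p_{i+1} = g_i⁻¹(p_i) and B_η(p_i) ⊆ U_i for i ≥ 1. Then, writing c_i = g_0 g_1 ⋯ g_i, the sets V_i = c_i(B_η(p_{i+1})) satisfy: (i) V_i ⊆ V_{i-1} for all 1 ≤ i ≤ n, and (ii) V_i ⊆ B_{Lη/λ^i}(p_0) for all 0 ≤ i ≤ n. -/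
/-- Key nesting lemma: given homeomorphisms `g 0, …, g n` whose inverses are
`(lam, U i; η)`-expanding, with `g 0` L-Lipschitz on the relevant ball, and a chain of
points `p i` with `p (i+1) = (g i)⁻¹ (p i)` and `B_η(p i) ⊆ U i` for `i ≥ 1`, the sets
`V i = c i (B_η (p (i+1)))`, where `c i = g 0 ∘ g 1 ∘ ⋯ ∘ g i`, are nested and
exponentially shrinking: `V i ⊆ V (i-1)` and `V i ⊆ B_{L·η/lam^i}(p 0)`. -/
theorem nested_exponentially_shrinking {M : Type*} [MetricSpace M]
    (n : ℕ) (lam L η : ℝ) (hlam : 1 < lam) (hL : lam ≤ L) (hη : 0 < η)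
    (g : ℕ → M ≃ₜ M) (U : ℕ → Set M) (p : ℕ → M) (c : ℕ → M ≃ₜ M)
    (hexp : ∀ i ≤ n, ∀ x ∈ U i, ∀ y ∈ U i,
      lam * dist x y ≤ dist ((g i).symm x) ((g i).symm y))
    (hballexp : ∀ i ≤ n, ∀ (x : M) (η' : ℝ), 0 < η' → η' ≤ η →
      Metric.ball x η' ⊆ U i →
        Metric.ball ((g i).symm x) (lam * η') ⊆ (g i).symm '' Metric.ball x η')
    (hlip : ∀ x ∈ Metric.ball (p 1) η, ∀ y ∈ Metric.ball (p 1) η,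
      dist (g 0 x) (g 0 y) ≤ L * dist x y)
    (hp : ∀ i ≤ n, p (i + 1) = (g i).symm (p i))
    (hU : ∀ i, 1 ≤ i → i ≤ n → Metric.ball (p i) η ⊆ U i)
    (hc0 : c 0 = g 0) (hc : ∀ i, c (i + 1) = (g (i + 1)).trans (c i)) :
    (∀ i, 1 ≤ i → i ≤ n →
      (c i : M → M) '' Metric.ball (p (i + 1)) η ⊆
        (c (i - 1) : M → M) '' Metric.ball (p i) η) ∧
    (∀ i ≤ n,
      (c i : M → M) '' Metric.ball (p (i + 1)) η ⊆
        Metric.ball (p 0) (L * η / lam ^ i)) := by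
  have hlam0 : (0:ℝ) < lam := lt_trans one_pos hlam
  -- key step: g i maps B(p (i+1), δ) into B(p i, δ/lam)
  have step : ∀ i, 1 ≤ i → i ≤ n → ∀ δ : ℝ, 0 < δ → δ ≤ η →
      (g i : M → M) '' Metric.ball (p (i + 1)) δ ⊆ Metric.ball (p i) (δ / lam) := by
    intro i h1 hi δ hδ hδη y hy
    obtain ⟨x, hx, rfl⟩ := hy
    have hsub : Metric.ball (p i) δ ⊆ U i :=
      (Metric.ball_subset_ball hδη).trans (hU i h1 hi)
    have hball := hballexp i hi (p i) δ hδ hδη hsub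
    rw [← hp i hi] at hball
    have hx' : x ∈ Metric.ball (p (i + 1)) (lam * δ) := by
      refine Metric.ball_subset_ball ?_ hx
      nlinarith
    obtain ⟨z, hz, hzx⟩ := hball hx'
    have hgx : (g i) x = z := by rw [← hzx, Homeomorph.apply_symm_apply]
    rw [hgx, Metric.mem_ball]
    have hpU : p i ∈ U i := hU i h1 hi (Metric.mem_ball_self hη)
    have := hexp i hi z (hsub hz) (p i) hpU
    rw [hzx, ← hp i hi] at this
    have hd : dist x (p (i + 1)) < δ := Metric.mem_ball.1 hx
    rw [lt_div_iff₀ hlam0]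
    calc dist z (p i) * lam = lam * dist z (p i) := by ring
      _ ≤ dist x (p (i + 1)) := this
      _ < δ := hd
  -- main estimate by induction
  have key : ∀ i, i ≤ n → ∀ δ : ℝ, 0 < δ → δ ≤ η →
      (c i : M → M) '' Metric.ball (p (i + 1)) δ ⊆
        Metric.ball (p 0) (L * δ / lam ^ i) := by
    intro i
    induction i with
    | zero =>
      intro _ δ hδ hδη y hy
      obtain ⟨x, hx, rfl⟩ := hy
      rw [hc0]
      have hp1 : p 1 = (g 0).symm (p 0) := hp 0 (Nat.zero_le n)
      have hx' : x ∈ Metric.ball (p 1) η := Metric.ball_subset_ball hδη hx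
      have hlx := hlip x hx' (p 1) (Metric.mem_ball_self hη)
      rw [Metric.mem_ball]
      have hg : (g 0) (p 1) = p 0 := by rw [hp1, Homeomorph.apply_symm_apply]
      have hd : dist x (p 1) < δ := Metric.mem_ball.1 hx
      have hL0 : (0:ℝ) < L := lt_of_lt_of_le hlam0 hL
      calc dist ((g 0) x) (p 0) = dist ((g 0) x) ((g 0) (p 1)) := by rw [hg]
        _ ≤ L * dist x (p 1) := hlx
        _ < L * δ := by nlinarith
        _ = L * δ / lam ^ 0 := by simp
    | succ i ih =>
      intro hin δ hδ hδη
      have hi : i ≤ n := Nat.le_of_succ_le hin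
      have hcomp : (c (i + 1) : M → M) = (c i : M → M) ∘ (g (i + 1) : M → M) := by
        rw [hc i]; rfl
      rw [hcomp, Set.image_comp]
      have h1 : (g (i+1) : M → M) '' Metric.ball (p (i + 1 + 1)) δ ⊆
          Metric.ball (p (i + 1)) (δ / lam) :=
        step (i + 1) (Nat.le_add_left 1 i) hin δ hδ hδη
      have hdl : δ / lam ≤ η := le_trans (by rw [div_le_iff₀ hlam0]; nlinarith) hδη
      have h2 := ih hi (δ / lam) (div_pos hδ hlam0) hdl
      refine (Set.image_mono h1).trans (h2.trans ?_)
      have : L * (δ / lam) / lam ^ i = L * δ / lam ^ (i + 1) := by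
        rw [mul_div_assoc L, div_div, ← pow_succ', mul_div_assoc]
      rw [this]
  constructor
  · intro i h1 hi
    obtain ⟨j, rfl⟩ : ∃ j, i = j + 1 := ⟨i - 1, (Nat.succ_pred_eq_of_pos h1).symm⟩
    have hcomp : (c (j + 1) : M → M) = (c j : M → M) ∘ (g (j + 1) : M → M) := by
      rw [hc j]; rfl
    rw [hcomp, Set.image_comp]
    simp only [Nat.add_sub_cancel]
    refine Set.image_mono ?_
    refine (step (j + 1) h1 hi η hη le_rfl).trans (Metric.ball_subset_ball ?_)
    rw [div_le_iff₀ hlam0]; nlinarith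
  · intro i hi
    exact key i hi η hη le_rfl
end

section
/- Let (M,d) be a metric space, Λ ⊆ M compact with no point of Λ isolated in M, and let a group Γ act on M by homeomorphisms preserving Λ. Suppose the action is expanding with expansion datum (𝒟, δ): for some x ∈ Λ and δ-code (α,p) with associated ray (c_i), the sets W_i = ρ(c_i)(B_δ(p_{i+1})) are nested neighborhoods of x with diameters tending to 0. Then: (1) there exist a point q ∈ Λ and a subsequence (g_j) of (c_i) such that ρ(g_j) converges to the constant map x uniformly on B_{δ/2}(q); and (2) there exists an infinite sequence (h_j) in Γ with ρ(h_j)(x) → x. In particular, x is a non-wandering point of the action. -/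
/-- Non-wandering dynamics from an expanding datum: given a compact invariant set `Λ`
(no point of which is isolated in `M`), a point `x ∈ Λ` with a code `(c, p)` whose
associated sets `W i = ρ (c i) (B_δ (p (i+1)))` are nested neighborhoods of `x` with
diameters tending to `0`, then (1) there are a point `q ∈ Λ` and a subsequence `c ∘ φ`
such that `ρ (c (φ j))` converges to the constant map `x` uniformly on `B_{δ/2}(q)`, and
(2) there is an infinite sequence `h : ℕ → Γ` with `ρ (h j) x → x`. -/
theorem nonwandering_of_code
    {Γ M : Type*} [Group Γ] [MetricSpace M]
    (ρ : Γ → M ≃ₜ M)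
    (hρ : ∀ g h : Γ, ρ (g * h) = (ρ h).trans (ρ g))
    (hρ1 : ρ 1 = Homeomorph.refl M)
    (Λ : Set M) (hΛc : IsCompact Λ) (hinv : ∀ g : Γ, ρ g '' Λ = Λ)
    (hnoiso : ∀ z ∈ Λ, Filter.NeBot (nhdsWithin z {z}ᶜ))
    (δ : ℝ) (hδ : 0 < δ) (x : M) (hx : x ∈ Λ)
    (p : ℕ → M) (hpΛ : ∀ i, p i ∈ Λ) (c : ℕ → Γ)
    (hcode : ∀ i, ρ (c i) (p (i + 1)) = x)
    (hnest : ∀ i, ρ (c (i + 1)) '' Metric.ball (p (i + 2)) δ ⊆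
      ρ (c i) '' Metric.ball (p (i + 1)) δ)
    (hmem : ∀ i, x ∈ ρ (c i) '' Metric.ball (p (i + 1)) δ)
    (hdiam : Filter.Tendsto
      (fun i => EMetric.diam (ρ (c i) '' Metric.ball (p (i + 1)) δ))
      Filter.atTop (nhds 0)) :
    (∃ q ∈ Λ, ∃ φ : ℕ → ℕ, StrictMono φ ∧
      TendstoUniformlyOn (fun j z => ρ (c (φ j)) z) (fun _ => x)
        Filter.atTop (Metric.ball q (δ / 2))) ∧
    (∃ h : ℕ → Γ, Filter.Tendsto (fun j => ρ (h j) x) Filter.atTop (nhds x)) := by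
  obtain ⟨q, hqΛ, φ, hφ, hconv⟩ :=
    hΛc.tendsto_subseq (x := fun i => p (i + 1)) (fun i => hpΛ (i + 1))
  have h2 : (0 : ℝ) < δ / 2 := by linarith
  obtain ⟨N, hN⟩ := Metric.tendsto_atTop.mp hconv (δ / 2) h2
  set ψ : ℕ → ℕ := fun j => φ (j + N) with hψdef
  have hψm : StrictMono ψ := fun a b hab => hφ (by omega)
  have hdq : ∀ j, dist (p (ψ j + 1)) q < δ / 2 := fun j => hN (j + N) (by omega)
  have key : TendstoUniformlyOn (fun j z => ρ (c (ψ j)) z) (fun _ => x)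
      Filter.atTop (Metric.ball q (δ / 2)) := by
    rw [Metric.tendstoUniformlyOn_iff]
    intro ε hε
    have hev : ∀ᶠ i in Filter.atTop,
        EMetric.diam (ρ (c i) '' Metric.ball (p (i + 1)) δ) < ENNReal.ofReal ε :=
      hdiam.eventually_lt_const (ENNReal.ofReal_pos.mpr hε)
    filter_upwards [hψm.tendsto_atTop.eventually hev] with j hj z hz
    have hz' : z ∈ Metric.ball (p (ψ j + 1)) δ := by
      rw [Metric.mem_ball] at hz ⊢
      calc dist z (p (ψ j + 1)) ≤ dist z q + dist q (p (ψ j + 1)) := dist_triangle _ _ _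
        _ < δ / 2 + δ / 2 := by
            have := hdq j
            rw [dist_comm] at this
            linarith
        _ = δ := by ring
    have hmemz : ρ (c (ψ j)) z ∈ ρ (c (ψ j)) '' Metric.ball (p (ψ j + 1)) δ :=
      Set.mem_image_of_mem _ hz'
    have hedist : edist x (ρ (c (ψ j)) z) ≤
        EMetric.diam (ρ (c (ψ j)) '' Metric.ball (p (ψ j + 1)) δ) :=
      EMetric.edist_le_diam_of_mem (hmem (ψ j)) hmemz
    exact edist_lt_ofReal.mp (lt_of_le_of_lt hedist hj)
  refine ⟨⟨q, hqΛ, ψ, hψm, key⟩, ?_⟩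
  set g0 := c (ψ 0) with hg0
  have hy : p (ψ 0 + 1) ∈ Metric.ball q (δ / 2) := Metric.mem_ball.mpr (hdq 0)
  have hinvpt : ρ g0⁻¹ x = p (ψ 0 + 1) := by
    apply (ρ g0).injective
    have h1 : ρ g0 (ρ g0⁻¹ x) = x := by
      have h := hρ g0 g0⁻¹
      rw [mul_inv_cancel, hρ1] at h
      have := congrArg (fun e : M ≃ₜ M => e x) h
      simpa [Homeomorph.trans_apply] using this.symm
    rw [h1, hcode (ψ 0)]
  refine ⟨fun j => c (ψ j) * g0⁻¹, ?_⟩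
  have hpt := key.tendsto_at hy
  have heq : ∀ j, ρ (c (ψ j) * g0⁻¹) x = ρ (c (ψ j)) (p (ψ 0 + 1)) := by
    intro j
    rw [hρ, Homeomorph.trans_apply, hinvpt]
  simpa only [heq] using hpt
end
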